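/- The sigmoid function satisfies the sector constraint in the sector [0, 1/4] about the point (0, 1/2): for every x ∈ ℝ, (sig(x) − 1/2)·((x/4 + 1/2) − sig(x)) ≥ 0, where sig(x) = 1/(1 + e^{−x}). -/

import Mathlib

private lemma sig_denom_pos (x : ℝ) : 0 < 1 + Real.exp (-x) := by
  positivity

private lemma g_hasDerivAt (x : ℝ) :
    HasDerivAt (fun y : ℝ => y / 4 + 1 / 2 - 1 / (1 + Real.exp (-y)))
      (1 / 4 - Real.exp (-x) / (1 + Real.exp (-x)) ^ 2) x := by
  have h1 : HasDerivAt (fun y : ℝ => 1 + Real.exp (-y)) (-Real.exp (-x)) x := by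
    have := (Real.hasDerivAt_exp (-x)).comp x ((hasDerivAt_id x).neg)
    simpa using (this.const_add 1)
  have h2 : HasDerivAt (fun y : ℝ => (1 + Real.exp (-y))⁻¹)
      (Real.exp (-x) / (1 + Real.exp (-x)) ^ 2) x := by
    have := h1.inv (ne_of_gt (sig_denom_pos x))
    rw [neg_neg] at this
    exact this
  have h3 : HasDerivAt (fun y : ℝ => y / 4 + 1 / 2) (1 / 4) x := by
    simpa using ((hasDerivAt_id x).div_const 4).add_const (1 / 2 : ℝ)
  have h4 := h3.sub h2
  simp only [one_div] at h4 ⊢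
  exact h4

private lemma g_monotone :
    Monotone (fun y : ℝ => y / 4 + 1 / 2 - 1 / (1 + Real.exp (-y))) := by
  apply monotone_of_deriv_nonneg
  · exact fun x => (g_hasDerivAt x).differentiableAt
  · intro x
    rw [(g_hasDerivAt x).deriv]
    have ht : 0 < Real.exp (-x) := Real.exp_pos _
    have key : 0 ≤ (1 - Real.exp (-x)) ^ 2 := sq_nonneg _
    have hd : 0 < (1 + Real.exp (-x)) ^ 2 := by positivity
    rw [sub_nonneg, div_le_div_iff₀ hd (by norm_num : (0:ℝ) < 4)] at *
    nlinarith [sq_nonneg (1 - Real.exp (-x))]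

theorem sigmoid_sector_constraint (x : ℝ) :
    0 ≤ (1 / (1 + Real.exp (-x)) - 1 / 2) * ((x / 4 + 1 / 2) - 1 / (1 + Real.exp (-x))) := by
  have hg0 : (0:ℝ) / 4 + 1 / 2 - 1 / (1 + Real.exp (-(0:ℝ))) = 0 := by
    norm_num
  rcases le_total 0 x with hx | hx
  · -- both factors nonnegative
    have h1 : (1:ℝ) / 2 ≤ 1 / (1 + Real.exp (-x)) := by
      have : Real.exp (-x) ≤ 1 := by
        rw [Real.exp_le_one_iff]; linarith
      rw [div_le_div_iff₀ (by norm_num) (sig_denom_pos x)]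
      linarith
    have h2 := g_monotone hx
    simp only [hg0] at h2
    have h2' : 0 ≤ x / 4 + 1 / 2 - 1 / (1 + Real.exp (-x)) := h2
    nlinarith
  · -- both factors nonpositive
    have h1 : 1 / (1 + Real.exp (-x)) ≤ (1:ℝ) / 2 := by
      have : (1:ℝ) ≤ Real.exp (-x) := by
        rw [Real.one_le_exp_iff]; linarith
      rw [div_le_div_iff₀ (sig_denom_pos x) (by norm_num)]
      linarith
    have h2 := g_monotone hx
    simp only [hg0] at h2
    have h2' : x / 4 + 1 / 2 - 1 / (1 + Real.exp (-x)) ≤ 0 := h2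
    nlinarith
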